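/- Let G be a finite simple graph with vertex set V of size N, and let f be a labeling of G with M(f) = M(G), i.e., f minimizes M among all labelings. If u and v are distinct non-adjacent vertices of G with f(u) < f(v), then Σ_{w ∈ N(u)} f(w) ≥ Σ_{w ∈ N(v)} f(w), where N(x) denotes the neighborhood of x in G. -/

import Mathlib

open Finset

/-- The product-sum M(f) of a vertex labeling: the sum of `f u * f v` over all edges
`{u,v}` of `G`, each edge counted exactly once. -/
noncomputable def prodSum {V : Type*} [Fintype V] (G : SimpleGraph V) (f : V → ℕ) : ℕ := by
  classical
  exact ∑ e ∈ G.edgeFinset, Sym2.lift ⟨fun u v => f u * f v, fun u v => Nat.mul_comm _ _⟩ e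

/-- A labeling of a graph on `V`: a bijection from the vertices onto `{1,…,|V|}`. -/
def IsLabeling (V : Type*) [Fintype V] (f : V → ℕ) : Prop :=
  Set.BijOn f Set.univ (Set.Icc 1 (Fintype.card V))

/-- MinPS of `G`: the minimum of `M(f)` over all labelings `f`. -/
noncomputable def minPS {V : Type*} [Fintype V] (G : SimpleGraph V) : ℕ :=
  sInf { m | ∃ f : V → ℕ, IsLabeling V f ∧ prodSum G f = m }

section Aux

variable {V : Type*} [Fintype V] [DecidableEq V] (G : SimpleGraph V) [DecidableRel G.Adj]

lemma incidence_eq_image (x : V) :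
    G.incidenceFinset x = (G.neighborFinset x).image (fun w => s(x, w)) := by
  ext e
  induction e with
  | h a b =>
    simp only [SimpleGraph.mem_incidenceFinset, SimpleGraph.mk'_mem_incidenceSet_iff,
      Finset.mem_image, SimpleGraph.mem_neighborFinset]
    constructor
    · rintro ⟨hab, rfl | rfl⟩
      · exact ⟨b, hab, rfl⟩
      · exact ⟨a, hab.symm, Sym2.eq_swap⟩
    · rintro ⟨w, hw, h⟩
      rw [Sym2.eq_iff] at h
      rcases h with ⟨rfl, rfl⟩ | ⟨rfl, rfl⟩
      · exact ⟨hw, Or.inl rfl⟩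
      · exact ⟨hw.symm, Or.inr rfl⟩

lemma sum_incidence (h : V → ℕ) (x : V) :
    ∑ e ∈ G.incidenceFinset x,
        Sym2.lift ⟨fun a b => h a * h b, fun a b => Nat.mul_comm _ _⟩ e
      = h x * ∑ w ∈ G.neighborFinset x, h w := by
  rw [incidence_eq_image, Finset.sum_image, Finset.mul_sum]
  · simp
  · intro a _ b _ hab
    exact Sym2.congr_right.mp hab

/-- `prodSum` splits as the part on edges incident to `u`, the part incident to `v`,
and the rest, when `u` and `v` are distinct and non-adjacent. -/
lemma prodSum_split (h : V → ℕ) (u v : V) (huv : u ≠ v) (hadj : ¬ G.Adj u v) :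
    prodSum G h
      = h u * ∑ w ∈ G.neighborFinset u, h w
        + h v * ∑ w ∈ G.neighborFinset v, h w
        + ∑ e ∈ {e ∈ G.edgeFinset | u ∉ e ∧ v ∉ e},
            Sym2.lift ⟨fun a b => h a * h b, fun a b => Nat.mul_comm _ _⟩ e := by
  classical
  have hps : prodSum G h
      = ∑ e ∈ G.edgeFinset, Sym2.lift ⟨fun a b => h a * h b, fun a b => Nat.mul_comm _ _⟩ e := by
    unfold prodSum
    congr 1
    exact Finset.coe_injective (by simp)
  rw [hps]
  rw [← Finset.sum_filter_add_sum_filter_not G.edgeFinset (fun e => u ∈ e)]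
  rw [← Finset.sum_filter_add_sum_filter_not {e ∈ G.edgeFinset | u ∉ e} (fun e => v ∈ e)]
  have h1 : {e ∈ G.edgeFinset | u ∈ e} = G.incidenceFinset u :=
    (G.incidenceFinset_eq_filter u).symm
  have h2 : {e ∈ {e ∈ G.edgeFinset | u ∉ e} | v ∈ e} = G.incidenceFinset v := by
    ext e
    induction e with
    | h a b =>
      simp only [Finset.mem_filter, SimpleGraph.mem_incidenceFinset,
        SimpleGraph.mk'_mem_incidenceSet_iff, SimpleGraph.mem_edgeFinset,
        SimpleGraph.mem_edgeSet, Sym2.mem_iff]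
      constructor
      · rintro ⟨⟨hab, -⟩, hv⟩
        exact ⟨hab, hv⟩
      · rintro ⟨hab, hv⟩
        refine ⟨⟨hab, ?_⟩, hv⟩
        rintro (rfl | rfl)
        · rcases hv with rfl | rfl
          · exact huv rfl
          · exact hadj hab
        · rcases hv with rfl | rfl
          · exact hadj hab.symm
          · exact huv rfl
  have h3 : {e ∈ {e ∈ G.edgeFinset | u ∉ e} | v ∉ e}
      = {e ∈ G.edgeFinset | u ∉ e ∧ v ∉ e} := by
    rw [Finset.filter_filter]
  rw [h1, h2, h3, sum_incidence, sum_incidence]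
  ring

end Aux

/-- If `f` is a labeling of `G` achieving the MinPS, and `u, v` are
distinct non-adjacent vertices with `f u < f v`, then the sum of the labels over the
neighborhood of `u` is at least the sum of the labels over the neighborhood of `v`. -/
theorem statement1 {V : Type*} [Fintype V] [DecidableEq V]
    (G : SimpleGraph V) [DecidableRel G.Adj] (f : V → ℕ)
    (hf : IsLabeling V f) (hmin : prodSum G f = minPS G)
    (u v : V) (huv : u ≠ v) (hadj : ¬ G.Adj u v) (hlt : f u < f v) :
    ∑ w ∈ G.neighborFinset v, f w ≤ ∑ w ∈ G.neighborFinset u, f w := by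
  classical
  set g : V → ℕ := fun w => f (Equiv.swap u v w) with hg
  have hgu : g u = f v := by simp [hg]
  have hgv : g v = f u := by simp [hg]
  have hgw : ∀ w, w ≠ u → w ≠ v → g w = f w := fun w h1 h2 => by
    simp [hg, Equiv.swap_apply_of_ne_of_ne h1 h2]
  -- g is a labeling
  have hgl : IsLabeling V g := by
    have hswap : Set.BijOn (Equiv.swap u v) Set.univ Set.univ :=
      Set.bijOn_univ.mpr (Equiv.swap u v).bijective
    exact hf.comp hswap
  -- minimality
  have hle : prodSum G f ≤ prodSum G g := by
    rw [hmin]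
    exact Nat.sInf_le ⟨g, hgl, rfl⟩
  -- same neighborhood sums
  have hNu : ∑ w ∈ G.neighborFinset u, g w = ∑ w ∈ G.neighborFinset u, f w := by
    apply Finset.sum_congr rfl
    intro w hw
    rw [SimpleGraph.mem_neighborFinset] at hw
    exact hgw w (fun h => G.loopless.irrefl u (h ▸ hw)) (fun h => hadj (h ▸ hw))
  have hNv : ∑ w ∈ G.neighborFinset v, g w = ∑ w ∈ G.neighborFinset v, f w := by
    apply Finset.sum_congr rfl
    intro w hw
    rw [SimpleGraph.mem_neighborFinset] at hw
    exact hgw w (fun h => hadj (h ▸ hw).symm) (fun h => G.loopless.irrefl v (h ▸ hw))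
  -- the rest-sums agree
  have hrest : ∑ e ∈ {e ∈ G.edgeFinset | u ∉ e ∧ v ∉ e},
        Sym2.lift ⟨fun a b => g a * g b, fun a b => Nat.mul_comm _ _⟩ e
      = ∑ e ∈ {e ∈ G.edgeFinset | u ∉ e ∧ v ∉ e},
        Sym2.lift ⟨fun a b => f a * f b, fun a b => Nat.mul_comm _ _⟩ e := by
    apply Finset.sum_congr rfl
    intro e he
    induction e with
    | h a b =>
      simp only [Finset.mem_filter, Sym2.mem_iff, not_or] at he
      obtain ⟨-, ⟨hau, hbu⟩, hav, hbv⟩ := he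
      simp [Sym2.lift_mk, hgw a (fun h => hau h.symm) (fun h => hav h.symm),
        hgw b (fun h => hbu h.symm) (fun h => hbv h.symm)]
  have hf' := prodSum_split G f u v huv hadj
  have hg' := prodSum_split G g u v huv hadj
  rw [hf', hg', hrest, hNu, hNv, hgu, hgv] at hle
  set Su := ∑ w ∈ G.neighborFinset u, f w
  set Sv := ∑ w ∈ G.neighborFinset v, f w
  by_contra hcon
  push_neg at hcon
  nlinarith [hle, hlt, hcon]
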